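/- Let z = (z_1, …, z_N) be a crystal. Then for every h = (h_1, …, h_N) ∈ (ℝ^d)^N, the second derivative of H along h at z satisfies (d²/dt²) H(z + t h)|_{t=0} = (č/a²) Σ_{⟨i,j⟩} ⟨h_i − h_j, z_i − z_j⟩², where the sum is over neighboring pairs; in particular this quadratic form is nonnegative. -/

import Mathlib

open Matrix

/-- The action of a `d × d` real matrix on `ℝ^d` (Euclidean space). -/
noncomputable def matAct {d : ℕ} (X : Matrix (Fin d) (Fin d) ℝ)
    (v : EuclideanSpace ℝ (Fin d)) : EuclideanSpace ℝ (Fin d) :=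
  Matrix.toEuclideanLin X v

/-- `z` is a crystal: distinct particles are either at distance exactly `a`
(neighboring pairs) or at distance `> b`. -/
def IsCrystal {d N : ℕ} (a b : ℝ) (z : Fin N → EuclideanSpace ℝ (Fin d)) : Prop :=
  ∀ i j : Fin N, i ≠ j → ‖z i - z j‖ = a ∨ b < ‖z i - z j‖

/-- The quadratic form ℰ₁(h) = (č/a²) Σ_{⟨i,j⟩} ⟨h_i − h_j, z_i − z_j⟩², the sum being
over neighboring pairs. -/
noncomputable def E1form {d N : ℕ} (a c : ℝ) (z h : Fin N → EuclideanSpace ℝ (Fin d)) : ℝ :=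
  (c / a ^ 2) * ∑ i : Fin N, ∑ j : Fin N,
    if i < j ∧ ‖z i - z j‖ = a then (inner ℝ (h i - h j) (z i - z j) : ℝ) ^ 2 else 0

/-- ℰ₂(h) = (č²/a⁴) Σ_i |Σ_{j : ⟨i,j⟩} ⟨h_i − h_j, z_i − z_j⟩ (z_i − z_j)|². -/
noncomputable def E2form {d N : ℕ} (a c : ℝ) (z h : Fin N → EuclideanSpace ℝ (Fin d)) : ℝ :=
  (c ^ 2 / a ^ 4) * ∑ i : Fin N,
    ‖∑ j : Fin N, if i ≠ j ∧ ‖z i - z j‖ = a then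
        (inner ℝ (h i - h j) (z i - z j) : ℝ) • (z i - z j) else 0‖ ^ 2

/-- ‖∇h‖₂² = Σ_{⟨i,j⟩} |h_i − h_j|² (sum over neighboring pairs). -/
noncomputable def gradSq {d N : ℕ} (a : ℝ) (z h : Fin N → EuclideanSpace ℝ (Fin d)) : ℝ :=
  ∑ i : Fin N, ∑ j : Fin N, if i < j ∧ ‖z i - z j‖ = a then ‖h i - h j‖ ^ 2 else 0

/-- Membership in H_z = {(X z_i + v)_i : X ∈ so(d), v ∈ ℝ^d}. -/
def InHz {d N : ℕ} (z h : Fin N → EuclideanSpace ℝ (Fin d)) : Prop :=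
  ∃ X : Matrix (Fin d) (Fin d) ℝ, Xᵀ = -X ∧
    ∃ v : EuclideanSpace ℝ (Fin d), ∀ i, h i = matAct X (z i) + v

/-- Membership in H_z^⊥, the orthogonal complement of H_z for the inner product
⟨h, h'⟩ = Σ_i ⟨h_i, h'_i⟩. -/
def InHzPerp {d N : ℕ} (z h : Fin N → EuclideanSpace ℝ (Fin d)) : Prop :=
  ∀ g : Fin N → EuclideanSpace ℝ (Fin d), InHz z g →
    ∑ i : Fin N, (inner ℝ (h i) (g i) : ℝ) = 0

/-- The crystal `z` is infinitesimally rigid: ℰ₁(h) = 0 holds exactly for h ∈ H_z. -/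
def InfRigid {d N : ℕ} (a b c : ℝ) (z : Fin N → EuclideanSpace ℝ (Fin d)) : Prop :=
  IsCrystal a b z ∧ ∀ h : Fin N → EuclideanSpace ℝ (Fin d), E1form a c z h = 0 ↔ InHz z h

/-- The Hamiltonian H(x) = Σ_{1≤i<j≤N} U(|x_i − x_j|). -/
noncomputable def Ham {d N : ℕ} (U : ℝ → ℝ) (x : Fin N → EuclideanSpace ℝ (Fin d)) : ℝ :=
  ∑ i : Fin N, ∑ j : Fin N, if i < j then U ‖x i - x j‖ else 0

/- STATEMENT 6: Let z = (z_1, …, z_N) be a crystal. Then for every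
h = (h_1, …, h_N) ∈ (ℝ^d)^N, the second derivative of H along h at z satisfies
(d²/dt²) H(z + t h)|_{t=0} = (č/a²) Σ_{⟨i,j⟩} ⟨h_i − h_j, z_i − z_j⟩², where the sum is
over neighboring pairs; in particular this quadratic form is nonnegative. -/

section AuxStmt6

open scoped RealInnerProductSpace


variable {d : ℕ}

private lemma quad_expand (w u : EuclideanSpace ℝ (Fin d)) (s : ℝ) :
    (inner ℝ (w + s • u) (w + s • u) : ℝ)
      = ⟪w, w⟫ + 2 * ⟪u, w⟫ * s + ⟪u, u⟫ * s ^ 2 := by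
  rw [real_inner_add_add_self, real_inner_smul_right, real_inner_smul_left,
    real_inner_smul_right, real_inner_comm w u]
  ring

private lemma q_hasDerivAt (w u : EuclideanSpace ℝ (Fin d)) (t : ℝ) :
    HasDerivAt (fun s : ℝ => (inner ℝ (w + s • u) (w + s • u) : ℝ))
      (2 * ⟪u, w + t • u⟫) t := by
  have h : HasDerivAt (fun s : ℝ => ⟪w, w⟫ + 2 * ⟪u, w⟫ * s + ⟪u, u⟫ * s ^ 2)
      (2 * ⟪u, w⟫ * 1 + ⟪u, u⟫ * (2 * t ^ 1)) t := by
    exact ((((hasDerivAt_id t).const_mul (2 * ⟪u, w⟫)).const_add _).add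
      ((hasDerivAt_pow 2 t).const_mul _))
  have heq : (fun s : ℝ => (inner ℝ (w + s • u) (w + s • u) : ℝ))
      = fun s : ℝ => ⟪w, w⟫ + 2 * ⟪u, w⟫ * s + ⟪u, u⟫ * s ^ 2 :=
    funext (quad_expand w u)
  rw [heq]
  convert h using 1
  rw [inner_add_right, real_inner_smul_right]
  ring

private lemma phi_hasDerivAt (w u : EuclideanSpace ℝ (Fin d)) (t : ℝ)
    (h : w + t • u ≠ 0) :
    HasDerivAt (fun s : ℝ => ‖w + s • u‖) (⟪u, w + t • u⟫ / ‖w + t • u‖) t := by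
  have hnorm : ‖w + t • u‖ ≠ 0 := norm_ne_zero_iff.mpr h
  have hq : (inner ℝ (w + t • u) (w + t • u) : ℝ) ≠ 0 := by
    rw [real_inner_self_eq_norm_sq]
    positivity
  have hs := (Real.hasDerivAt_sqrt hq).comp t (q_hasDerivAt w u t)
  have heq : (fun s : ℝ => Real.sqrt ((inner ℝ (w + s • u) (w + s • u) : ℝ)))
      = fun s : ℝ => ‖w + s • u‖ := by
    funext s
    rw [real_inner_self_eq_norm_sq, Real.sqrt_sq (norm_nonneg _)]
  have hs' : HasDerivAt (fun s : ℝ => ‖w + s • u‖)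
      (1 / (2 * Real.sqrt ((inner ℝ (w + t • u) (w + t • u) : ℝ))) * (2 * ⟪u, w + t • u⟫)) t := by
    rw [← heq]
    exact hs
  convert hs' using 1
  rw [real_inner_self_eq_norm_sq, Real.sqrt_sq (norm_nonneg _)]
  field_simp

private lemma f_hasDerivAt (U : ℝ → ℝ) (hU : Differentiable ℝ U)
    (w u : EuclideanSpace ℝ (Fin d)) (t : ℝ) (h : w + t • u ≠ 0) :
    HasDerivAt (fun s : ℝ => U ‖w + s • u‖)
      (deriv U ‖w + t • u‖ * (⟪u, w + t • u⟫ / ‖w + t • u‖)) t :=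
  ((hU ‖w + t • u‖).hasDerivAt).comp t (phi_hasDerivAt w u t h)

private noncomputable def gfun (U : ℝ → ℝ) (w u : EuclideanSpace ℝ (Fin d)) (t : ℝ) : ℝ :=
  deriv U ‖w + t • u‖ * (⟪u, w + t • u⟫ / ‖w + t • u‖)

private lemma inner_hasDerivAt (w u : EuclideanSpace ℝ (Fin d)) (t : ℝ) :
    HasDerivAt (fun s : ℝ => ⟪u, w + s • u⟫) ⟪u, u⟫ t := by
  have h : HasDerivAt (fun s : ℝ => ⟪u, w⟫ + ⟪u, u⟫ * s) (⟪u, u⟫ * 1) t :=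
    ((hasDerivAt_id t).const_mul _).const_add _
  have heq : (fun s : ℝ => ⟪u, w + s • u⟫) = fun s : ℝ => ⟪u, w⟫ + ⟪u, u⟫ * s := by
    funext s
    rw [inner_add_right, real_inner_smul_right]
    ring
  rw [heq]
  simpa using h

private lemma gfun_hasDerivAt (U : ℝ → ℝ) (a c : ℝ) (ha : 0 < a)
    (hder : Differentiable ℝ (deriv U))
    (hU'a : deriv U a = 0) (hU''a : deriv (deriv U) a = c)
    (w u : EuclideanSpace ℝ (Fin d)) (hw : ‖w‖ = a) :
    HasDerivAt (gfun U w u) (c * ⟪u, w⟫ ^ 2 / a ^ 2) 0 := by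
  have hane : a ≠ 0 := ne_of_gt ha
  have hwne : w ≠ 0 := by
    intro h0
    rw [h0, norm_zero] at hw
    exact hane hw.symm
  have hw0 : w + (0 : ℝ) • u = w := by simp
  have hφ : HasDerivAt (fun s : ℝ => ‖w + s • u‖) (⟪u, w⟫ / a) 0 := by
    have := phi_hasDerivAt w u 0 (by rw [hw0]; exact hwne)
    simpa [hw0, hw] using this
  have hU2 : HasDerivAt (deriv U) c ((fun s : ℝ => ‖w + s • u‖) 0) := by
    have : HasDerivAt (deriv U) (deriv (deriv U) a) a := (hder a).hasDerivAt
    rw [hU''a] at this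
    simpa [hw0, hw] using this
  have h1 : HasDerivAt (fun s : ℝ => deriv U ‖w + s • u‖) (c * (⟪u, w⟫ / a)) 0 :=
    by have := hU2.comp 0 hφ; exact this
  have h2 : HasDerivAt (fun s : ℝ => ⟪u, w + s • u⟫) ⟪u, u⟫ 0 := inner_hasDerivAt w u 0
  have hg0 : (fun s : ℝ => ‖w + s • u‖) 0 ≠ 0 := by
    simp only [zero_smul, add_zero, hw]
    exact hane
  have h3 : HasDerivAt (fun s : ℝ => ⟪u, w + s • u⟫ / ‖w + s • u‖)
      ((⟪u, u⟫ * ‖w + (0:ℝ) • u‖ - ⟪u, w + (0:ℝ) • u⟫ * (⟪u, w⟫ / a)) / ‖w + (0:ℝ) • u‖ ^ 2) 0 :=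
    h2.div hφ hg0
  have htot := h1.mul h3
  have : HasDerivAt (gfun U w u)
      (c * (⟪u, w⟫ / a) * (⟪u, w + (0:ℝ) • u⟫ / ‖w + (0:ℝ) • u‖) +
        deriv U ‖w + (0:ℝ) • u‖ *
          ((⟪u, u⟫ * ‖w + (0:ℝ) • u‖ - ⟪u, w + (0:ℝ) • u⟫ * (⟪u, w⟫ / a)) / ‖w + (0:ℝ) • u‖ ^ 2)) 0 :=
    htot
  rw [hw0, hw, hU'a] at this
  convert this using 1
  field_simp
  ring

private lemma U_zero_of_gt (U : ℝ → ℝ) (hUsupp : HasCompactSupport U) (b : ℝ)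
    (hb : b = sInf {r : ℝ | 0 < r ∧ ∀ s, r < s → U s = 0}) :
    ∀ s, b < s → U s = 0 := by
  obtain ⟨R, hR⟩ := hUsupp.isBounded.subset_closedBall 0
  have hmem : max R 1 ∈ {r : ℝ | 0 < r ∧ ∀ s, r < s → U s = 0} := by
    refine ⟨lt_of_lt_of_le one_pos (le_max_right _ _), fun s hs => ?_⟩
    apply image_eq_zero_of_notMem_tsupport
    intro hmem
    have := hR hmem
    rw [Metric.mem_closedBall, Real.dist_eq, sub_zero] at this
    have h1 : R < s := lt_of_le_of_lt (le_max_left R 1) hs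
    have h2 : 0 < s := lt_of_lt_of_le (lt_of_lt_of_le one_pos (le_max_right R 1)) hs.le
    rw [abs_of_pos h2] at this
    linarith
  intro s hs
  obtain ⟨r, hr, hrs⟩ := exists_lt_of_csInf_lt ⟨_, hmem⟩ (hb ▸ hs)
  exact hr.2 s hrs

end AuxStmt6

section MainStmt6

open scoped RealInnerProductSpace

theorem stmt6 {d N : ℕ} (U : ℝ → ℝ) (a b c : ℝ)
    (hU : ContDiff ℝ 3 U) (hUsupp : HasCompactSupport U) (hUeven : ∀ r, U (-r) = U r)
    (ha : 0 < a) (hmin : ∀ r, 0 ≤ r → U a ≤ U r)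
    (huniq : ∀ r, 0 < r → (∀ s, 0 ≤ s → U r ≤ U s) → r = a)
    (hc : deriv (deriv U) a = c) (hcpos : 0 < c)
    (hb : b = sInf {r : ℝ | 0 < r ∧ ∀ s, r < s → U s = 0})
    (z h : Fin N → EuclideanSpace ℝ (Fin d)) (hz : IsCrystal a b z) :
    iteratedDeriv 2 (fun t : ℝ => Ham U (fun i => z i + t • h i)) 0 = E1form a c z h ∧
      0 ≤ E1form a c z h := by
  classical
  have hane : a ≠ 0 := ne_of_gt ha
  -- nonnegativity
  have hnn : 0 ≤ E1form a c z h := by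
    rw [E1form]
    apply mul_nonneg (by positivity)
    apply Finset.sum_nonneg
    intro i _
    apply Finset.sum_nonneg
    intro j _
    split_ifs with hcond
    · positivity
    · exact le_refl 0
  refine ⟨?_, hnn⟩
  -- basic facts on U
  have hUz : ∀ s, b < s → U s = 0 := U_zero_of_gt U hUsupp b hb
  have hUd : Differentiable ℝ U := hU.differentiable (by norm_num)
  have h3 : ContDiff ℝ ((2 : ℕ) + 1) U := by
    convert hU using 2
    norm_num
  have hder2 : ContDiff ℝ (2 : ℕ) (deriv U) := (contDiff_succ_iff_deriv.mp h3).2.2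
  have hderd : Differentiable ℝ (deriv U) := hder2.differentiable (by norm_num)
  have hU'a : deriv U a = 0 := by
    have hloc : IsLocalMin U a :=
      (eventually_gt_nhds ha).mono fun t ht => hmin t ht.le
    exact hloc.deriv_eq_zero
  have hUa_neg : U a < 0 := by
    set s₀ : ℝ := max a b + 1 with hs₀
    have hs0b : b < s₀ := lt_of_le_of_lt (le_max_right a b) (by simp [hs₀])
    have hs0a : a < s₀ := lt_of_le_of_lt (le_max_left a b) (by simp [hs₀])
    have hs0pos : 0 < s₀ := lt_trans ha hs0a
    have hU0 : U s₀ = 0 := hUz s₀ hs0b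
    have h1 : U a ≤ 0 := hU0 ▸ hmin s₀ hs0pos.le
    rcases lt_or_eq_of_le h1 with h2 | h2
    · exact h2
    · exfalso
      have : s₀ = a := huniq s₀ hs0pos fun r hr => by
        rw [hU0, ← h2]; exact hmin r hr
      linarith
  -- pairwise data
  have hC1 : ∀ i j : Fin N, ∀ᶠ t in nhds (0 : ℝ),
      HasDerivAt (fun s : ℝ => if i < j then U ‖(z i - z j) + s • (h i - h j)‖ else 0)
        ((if i < j ∧ ‖z i - z j‖ = a then gfun U (z i - z j) (h i - h j) else fun _ => 0) t) t := by
    intro i j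
    by_cases hij : i < j
    · have hne : i ≠ j := ne_of_lt hij
      rcases hz i j hne with hwa | hwb
      · -- neighboring pair
        have hwne : z i - z j ≠ 0 := by
          intro h0; rw [h0, norm_zero] at hwa; exact hane hwa.symm
        have hcont : Continuous fun t : ℝ => (z i - z j) + t • (h i - h j) :=
          continuous_const.add (continuous_id.smul continuous_const)
        have hev : ∀ᶠ t in nhds (0 : ℝ), (z i - z j) + t • (h i - h j) ≠ 0 := by
          apply hcont.continuousAt.eventually_ne
          simpa using hwne
        filter_upwards [hev] with t ht
        simp only [if_pos hij, if_pos (⟨hij, hwa⟩ : i < j ∧ ‖z i - z j‖ = a)]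
        exact f_hasDerivAt U hUd _ _ t ht
      · -- distant pair
        have hwa' : ‖z i - z j‖ ≠ a := by
          intro hEq
          have : U a = 0 := hUz a (hEq ▸ hwb)
          exact absurd this (ne_of_lt hUa_neg)
        have hcont : Continuous fun t : ℝ => ‖(z i - z j) + t • (h i - h j)‖ :=
          (continuous_const.add (continuous_id.smul continuous_const)).norm
        have h0 : b < (fun t : ℝ => ‖(z i - z j) + t • (h i - h j)‖) 0 := by simpa using hwb
        have hev : ∀ᶠ t in nhds (0 : ℝ), U ‖(z i - z j) + t • (h i - h j)‖ = 0 :=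
          ((hcont.tendsto 0).eventually (eventually_gt_nhds h0)).mono fun t ht => hUz _ ht
        filter_upwards [hev.eventually_nhds] with t ht
        simp only [if_pos hij, if_neg (fun hcon : i < j ∧ ‖z i - z j‖ = a => hwa' hcon.2)]
        exact (hasDerivAt_const t (0 : ℝ)).congr_of_eventuallyEq
          (ht.mono fun s hs => by simpa using hs)
    · refine Filter.Eventually.of_forall fun t => ?_
      simp only [if_neg hij, if_neg (fun hcon : i < j ∧ ‖z i - z j‖ = a => hij hcon.1)]
      exact hasDerivAt_const t (0 : ℝ)
  have hC2 : ∀ i j : Fin N,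
      HasDerivAt ((if i < j ∧ ‖z i - z j‖ = a then gfun U (z i - z j) (h i - h j) else fun _ => 0))
        (if i < j ∧ ‖z i - z j‖ = a then
          c * (inner ℝ (h i - h j) (z i - z j) : ℝ) ^ 2 / a ^ 2 else 0) 0 := by
    intro i j
    by_cases hcond : i < j ∧ ‖z i - z j‖ = a
    · simp only [if_pos hcond]
      exact gfun_hasDerivAt U a c ha hderd hU'a hc (z i - z j) (h i - h j) hcond.2
    · simp only [if_neg hcond]
      exact hasDerivAt_const 0 0
  -- the path function
  set F : ℝ → ℝ := fun t => Ham U (fun i => z i + t • h i) with hFdef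
  have hpath : ∀ (t : ℝ) (i j : Fin N),
      (z i + t • h i) - (z j + t • h j) = (z i - z j) + t • (h i - h j) := by
    intro t i j
    rw [smul_sub]
    abel
  have hFeq : F = fun t => ∑ i : Fin N, ∑ j : Fin N,
      (if i < j then U ‖(z i - z j) + t • (h i - h j)‖ else 0) := by
    funext t
    simp only [hFdef, Ham, hpath t]
  have hFder : ∀ᶠ t in nhds (0 : ℝ), HasDerivAt F
      (∑ i : Fin N, ∑ j : Fin N,
        (if i < j ∧ ‖z i - z j‖ = a then gfun U (z i - z j) (h i - h j) else fun _ => 0) t) t := by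
    have hall : ∀ᶠ t in nhds (0 : ℝ), ∀ i : Fin N, ∀ j : Fin N,
        HasDerivAt (fun s : ℝ => if i < j then U ‖(z i - z j) + s • (h i - h j)‖ else 0)
          ((if i < j ∧ ‖z i - z j‖ = a then gfun U (z i - z j) (h i - h j) else fun _ => 0) t) t :=
      Filter.eventually_all.mpr fun i => Filter.eventually_all.mpr (hC1 i)
    filter_upwards [hall] with t ht
    rw [hFeq]
    exact HasDerivAt.fun_sum fun i _ => HasDerivAt.fun_sum fun j _ => ht i j
  have hderivF : deriv F =ᶠ[nhds (0 : ℝ)] fun t => ∑ i : Fin N, ∑ j : Fin N,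
      (if i < j ∧ ‖z i - z j‖ = a then gfun U (z i - z j) (h i - h j) else fun _ => 0) t :=
    hFder.mono fun t ht => ht.deriv
  have hG : HasDerivAt (fun t => ∑ i : Fin N, ∑ j : Fin N,
      (if i < j ∧ ‖z i - z j‖ = a then gfun U (z i - z j) (h i - h j) else fun _ => 0) t)
      (∑ i : Fin N, ∑ j : Fin N, if i < j ∧ ‖z i - z j‖ = a then
          c * (inner ℝ (h i - h j) (z i - z j) : ℝ) ^ 2 / a ^ 2 else 0) 0 :=
    HasDerivAt.fun_sum fun i _ => HasDerivAt.fun_sum fun j _ => hC2 i j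
  have hiter : iteratedDeriv 2 F 0 = deriv (deriv F) 0 := by
    rw [show (2 : ℕ) = 1 + 1 from rfl, iteratedDeriv_succ, iteratedDeriv_one]
  rw [hiter, hderivF.deriv_eq, hG.deriv]
  rw [E1form, Finset.mul_sum]
  refine Finset.sum_congr rfl fun i _ => ?_
  rw [Finset.mul_sum]
  refine Finset.sum_congr rfl fun j _ => ?_
  split_ifs with hcond
  · field_simp
  · simp


end MainStmt6
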